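/- Let (A, m) be a local ring with J ⊆ Jac(B) and J' ⊆ Jac(C), and assume J and J' are finitely generated as A-modules. Then m ⋈^{f,g}(J,J') = √(m · (A ⋈^{f,g}(J,J'))), i.e., the maximal ideal m ⋈^{f,g}(J,J') := {(f(a)+j, g(a)+j') : a ∈ m, j ∈ J, j' ∈ J'} equals the radical of the ideal of A ⋈^{f,g}(J,J') generated by the image of m. -/

import Mathlib

open IsLocalRing

variable {A B C : Type} [CommRing A] [CommRing B] [CommRing C]

def BiAmalg (f : A →+* B) (g : A →+* C) (J : Ideal B) (J' : Ideal C) :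
    Subring (B × C) where
  carrier := {x | ∃ a : A, ∃ j ∈ J, ∃ j' ∈ J', x = (f a + j, g a + j')}
  zero_mem' := ⟨0, 0, J.zero_mem, 0, J'.zero_mem, by simp <;> rfl⟩
  one_mem' := ⟨1, 0, J.zero_mem, 0, J'.zero_mem, by simp <;> rfl⟩
  add_mem' := by
    rintro x y ⟨a, j, hj, j', hj', rfl⟩ ⟨b, k, hk, k', hk', rfl⟩
    exact ⟨a + b, j + k, J.add_mem hj hk, j' + k', J'.add_mem hj' hk', by
      simp only [Prod.mk_add_mk, map_add, Prod.mk.injEq]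
      constructor <;> ring⟩
  neg_mem' := by
    rintro x ⟨a, j, hj, j', hj', rfl⟩
    exact ⟨-a, -j, J.neg_mem hj, -j', J'.neg_mem hj', by
      simp only [Prod.neg_mk, map_neg, Prod.mk.injEq]
      constructor <;> ring⟩
  mul_mem' := by
    rintro x y ⟨a, j, hj, j', hj', rfl⟩ ⟨b, k, hk, k', hk', rfl⟩
    exact ⟨a * b, f a * k + j * f b + j * k,
      J.add_mem (J.add_mem (J.mul_mem_left _ hk) (J.mul_mem_right _ hj)) (J.mul_mem_right _ hj),
      g a * k' + j' * g b + j' * k',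
      J'.add_mem (J'.add_mem (J'.mul_mem_left _ hk') (J'.mul_mem_right _ hj'))
        (J'.mul_mem_right _ hj'), by
      simp only [Prod.mk_mul_mk, map_mul, Prod.mk.injEq]
      constructor <;> ring⟩

theorem BiAmalg.mem_mk (f : A →+* B) (g : A →+* C) (J : Ideal B) (J' : Ideal C)
    (a : A) {j : B} (hj : j ∈ J) {j' : C} (hj' : j' ∈ J') :
    (f a + j, g a + j') ∈ BiAmalg f g J J' :=
  ⟨a, j, hj, j', hj', rfl⟩

def BiAmalg.incl (f : A →+* B) (g : A →+* C) (J : Ideal B) (J' : Ideal C) :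
    A →+* BiAmalg f g J J' where
  toFun a := ⟨(f a, g a), a, 0, J.zero_mem, 0, J'.zero_mem, by simp⟩
  map_one' := Subtype.ext (by simp)
  map_mul' x y := Subtype.ext (by simp [Prod.mk_mul_mk])
  map_zero' := Subtype.ext (by simp)
  map_add' x y := Subtype.ext (by simp [Prod.mk_add_mk])

instance BiAmalg.moduleA (f : A →+* B) (g : A →+* C) (J : Ideal B) (J' : Ideal C) :
    Module A (BiAmalg f g J J') :=
  Module.compHom _ (BiAmalg.incl f g J J')


/-- For an ideal `I ⊆ A`, the ideal `I ⋈^{f,g} (J, J') = {(f a + j, g a + j') : a ∈ I, j ∈ J, j' ∈ J'}`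
of the bi-amalgamation. -/
def BiAmalg.idealOf (f : A →+* B) (g : A →+* C) (J : Ideal B) (J' : Ideal C) (I : Ideal A) :
    Ideal (BiAmalg f g J J') where
  carrier := {x | ∃ a ∈ I, ∃ j ∈ J, ∃ j' ∈ J', (x : B × C) = (f a + j, g a + j')}
  zero_mem' := ⟨0, I.zero_mem, 0, J.zero_mem, 0, J'.zero_mem, by simp <;> rfl⟩
  add_mem' := by
    rintro x y ⟨a, ha, j, hj, j', hj', hx⟩ ⟨b, hb, k, hk, k', hk', hy⟩
    refine ⟨a + b, I.add_mem ha hb, j + k, J.add_mem hj hk, j' + k', J'.add_mem hj' hk', ?_⟩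
    have : ((x + y : BiAmalg f g J J') : B × C) = (x : B × C) + (y : B × C) := rfl
    rw [this, hx, hy]
    simp only [Prod.mk_add_mk, map_add, Prod.mk.injEq]
    constructor <;> ring
  smul_mem' := by
    rintro ⟨c, b, k, hk, k', hk', rfl⟩ x ⟨a, ha, j, hj, j', hj', hx⟩
    refine ⟨b * a, I.mul_mem_left b ha, f b * j + k * f a + k * j,
      J.add_mem (J.add_mem (J.mul_mem_left _ hj) (J.mul_mem_right _ hk)) (J.mul_mem_right _ hk),
      g b * j' + k' * g a + k' * j',
      J'.add_mem (J'.add_mem (J'.mul_mem_left _ hj') (J'.mul_mem_right _ hk'))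
        (J'.mul_mem_right _ hk'), ?_⟩
    have : (((⟨(f b + k, g b + k'), BiAmalg.mem_mk f g J J' b hk hk'⟩ : BiAmalg f g J J') • x :
        BiAmalg f g J J') : B × C) = (f b + k, g b + k') * (x : B × C) := rfl
    rw [this, hx]
    simp only [Prod.mk_mul_mk, map_mul, Prod.mk.injEq]
    constructor <;> ring

open IsLocalRing

variable {A B C : Type} [CommRing A] [CommRing B] [CommRing C]

/-- A unit plus an element of the Jacobson radical is a unit. -/
lemma isUnit_add_jacobson {u x : B} (hu : IsUnit u) (hx : x ∈ (⊥ : Ideal B).jacobson) :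
    IsUnit (u + x) := by
  obtain ⟨v, rfl⟩ := hu
  have h1 : IsUnit (1 + (v⁻¹ : Bˣ) * x) := by
    have := Ideal.mem_jacobson_bot.mp
      (Ideal.mul_mem_left _ ((v⁻¹ : Bˣ) : B) hx) 1
    simpa [add_comm] using this
  have h2 : (v : B) + x = v * (1 + (v⁻¹ : Bˣ) * x) := by
    rw [mul_add, mul_one, ← mul_assoc, Units.mul_inv, one_mul]
  rw [h2]
  exact (Units.isUnit v).mul h1

lemma pow_mem_of_rel (f : A →+* B) (J : Ideal B) [IsLocalRing A]
    (hJ : J ≤ (⊥ : Ideal B).jacobson) {j : B} (hj : j ∈ J)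
    (n : ℕ) (c : ℕ → A) (hcn : c n ∉ maximalIdeal A)
    (hrel : ∑ i ∈ Finset.range (n + 1), f (c i) * j ^ (i + 1) = 0) :
    ∃ s, j ^ (s + 1) ∈ Ideal.map f (maximalIdeal A) * J := by
  classical
  set T := Ideal.map f (maximalIdeal A) * J with hT
  have hpowJ : ∀ i : ℕ, j ^ (i + 1) ∈ J := fun i => J.pow_mem_of_mem hj (i + 1) (by omega)
  have hex : ∃ i, c i ∉ maximalIdeal A := ⟨n, hcn⟩
  set s := Nat.find hex with hs
  have hcs : c s ∉ maximalIdeal A := Nat.find_spec hex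
  have hmin : ∀ i < s, c i ∈ maximalIdeal A := fun i hi => not_not.mp (Nat.find_min hex hi)
  have hsn : s ≤ n := Nat.find_le hcn
  refine ⟨s, ?_⟩
  have hlow : ∑ i ∈ Finset.range s, f (c i) * j ^ (i + 1) ∈ T := by
    refine Ideal.sum_mem _ fun i hi => Ideal.mul_mem_mul
      (Ideal.mem_map_of_mem f (hmin i (Finset.mem_range.mp hi))) (hpowJ i)
  set E := ∑ i ∈ Finset.range (n - s), f (c (s + i + 1)) * j ^ i with hE
  have hmid : ∑ i ∈ Finset.Ico s (n + 1), f (c i) * j ^ (i + 1)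
      = j ^ (s + 1) * (f (c s) + j * E) := by
    rw [Finset.sum_Ico_eq_sum_range]
    have h1 : n + 1 - s = (n - s) + 1 := by omega
    rw [h1, Finset.sum_range_succ']
    have h2 : ∀ i ∈ Finset.range (n - s), f (c (s + (i + 1))) * j ^ ((s + (i + 1)) + 1)
        = j ^ (s + 1) * (j * (f (c (s + i + 1)) * j ^ i)) := by
      intro i _
      have h3 : s + (i + 1) = s + i + 1 := by omega
      rw [h3]; ring
    rw [Finset.sum_congr rfl h2, ← Finset.mul_sum, ← Finset.mul_sum, Nat.add_zero]
    rw [hE]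
    set w := ∑ i ∈ Finset.range (n - s), f (c (s + i + 1)) * j ^ i with hw
    ring_nf
  have hsplit := Finset.sum_range_add_sum_Ico
    (fun i => f (c i) * j ^ (i + 1)) (show s ≤ n + 1 by omega)
  have hu : IsUnit (f (c s) + j * E) := by
    refine isUnit_add_jacobson ((not_not.mp hcs).map f) ?_
    exact Ideal.mul_mem_right E _ (hJ hj)
  have hTm : j ^ (s + 1) * (f (c s) + j * E) ∈ T := by
    have h4 : j ^ (s + 1) * (f (c s) + j * E)
        = -(∑ i ∈ Finset.range s, f (c i) * j ^ (i + 1)) := by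
      have := hsplit.trans hrel
      rw [hmid] at this
      linear_combination this
    rw [h4]
    exact T.neg_mem hlow
  obtain ⟨v, hv⟩ := hu
  have h5 : j ^ (s + 1) = (j ^ (s + 1) * (f (c s) + j * E)) * (v⁻¹ : Bˣ) := by
    rw [← hv, mul_assoc, Units.mul_inv, mul_one]
  rw [h5]
  exact T.mul_mem_right _ hTm

lemma exists_pow_mem_mul (f : A →+* B) (J : Ideal B) [IsLocalRing A]
    (hJ : J ≤ (⊥ : Ideal B).jacobson)
    (hfin : letI : Module A J := Module.compHom _ f; Module.Finite A J)
    {j : B} (hj : j ∈ J) :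
    ∃ n, 0 < n ∧ j ^ n ∈ Ideal.map f (maximalIdeal A) * J := by
  letI : Module A J := Module.compHom _ f
  haveI : Module.Finite A J := hfin
  let φ : Module.End A J :=
    { toFun := fun x => ⟨j * x, J.mul_mem_left j x.2⟩
      map_add' := fun x y => Subtype.ext (by
        show j * ((x : B) + y) = j * x + j * y
        ring)
      map_smul' := fun a x => Subtype.ext (by
        show j * (f a * (x : B)) = f a * (j * x)
        ring) }
  have hpow : ∀ (i : ℕ) (x : J), (((φ ^ i) x : J) : B) = j ^ i * x := by
    intro i
    induction i with
    | zero => intro x; simp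
    | succ i ih =>
      intro x
      rw [pow_succ, Module.End.mul_apply, ih]
      show j ^ i * (j * (x : B)) = j ^ (i + 1) * x
      rw [pow_succ]; ring
  obtain ⟨p, hmonic, hp⟩ := (Module.End.isIntegral (R := A) (M := J)).isIntegral φ
  have h0 : (Polynomial.aeval φ) p = 0 := hp
  rw [Polynomial.aeval_eq_sum_range] at h0
  have h1 : ∑ i ∈ Finset.range (p.natDegree + 1), f (p.coeff i) * j ^ (i + 1) = 0 := by
    have h2 := congrArg (fun ψ : Module.End A J => ((ψ ⟨j, hj⟩ : J) : B)) h0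
    simp only [LinearMap.sum_apply, LinearMap.smul_apply, LinearMap.zero_apply,
      ZeroMemClass.coe_zero, AddSubmonoidClass.coe_finset_sum] at h2
    rw [← h2]
    refine Finset.sum_congr rfl fun i _ => ?_
    have h3 : ((p.coeff i • ((φ ^ i) ⟨j, hj⟩) : J) : B) = f (p.coeff i) * ((φ ^ i) ⟨j, hj⟩ : B) :=
      rfl
    rw [h3, hpow, pow_succ]
  have hcn : p.coeff p.natDegree ∉ maximalIdeal A := by
    rw [Polynomial.Monic.coeff_natDegree hmonic]
    exact fun h => (Ideal.ne_top_iff_one _).mp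
      (IsLocalRing.maximalIdeal.isMaximal A).ne_top h
  obtain ⟨s, hs⟩ := pow_mem_of_rel f J hJ hj p.natDegree (fun i => p.coeff i) hcn h1
  exact ⟨s + 1, by omega, hs⟩

lemma BiAmalg.memL (f : A →+* B) (g : A →+* C) (J : Ideal B) (J' : Ideal C) {y : B}
    (hy : y ∈ J) : ((y, (0 : C)) : B × C) ∈ BiAmalg f g J J' :=
  ⟨0, y, hy, 0, J'.zero_mem, by simp⟩

lemma BiAmalg.memR (f : A →+* B) (g : A →+* C) (J : Ideal B) (J' : Ideal C) {y : C}
    (hy : y ∈ J') : (((0 : B), y) : B × C) ∈ BiAmalg f g J J' :=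
  ⟨0, 0, J.zero_mem, y, hy, by simp⟩

lemma BiAmalg.mem_of_val_eq {f : A →+* B} {g : A →+* C} {J : Ideal B} {J' : Ideal C}
    {I : Ideal (BiAmalg f g J J')} {x y : BiAmalg f g J J'}
    (h : (x : B × C) = (y : B × C)) (hx : x ∈ I) : y ∈ I :=
  (Subtype.ext h : x = y) ▸ hx

open Pointwise in
lemma BiAmalg.left_mem_map [IsLocalRing A] (f : A →+* B) (g : A →+* C) (J : Ideal B) (J' : Ideal C) {x : B}
    (hx : x ∈ Ideal.map f (IsLocalRing.maximalIdeal A) * J) :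
    ∀ (h : ((x, (0 : C)) : B × C) ∈ BiAmalg f g J J'),
      (⟨(x, 0), h⟩ : BiAmalg f g J J') ∈
        Ideal.map (BiAmalg.incl f g J J') (IsLocalRing.maximalIdeal A) := by
  have hspan : Ideal.map f (IsLocalRing.maximalIdeal A) * J
      = Ideal.span ((f '' (IsLocalRing.maximalIdeal A : Set A)) * (J : Set B)) := by
    have h1 : Ideal.map f (IsLocalRing.maximalIdeal A)
        = Ideal.span (f '' (IsLocalRing.maximalIdeal A : Set A)) := rfl
    rw [h1, ← Ideal.span_mul_span', Ideal.span_eq]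
  rw [hspan] at hx
  have key : ∀ z, z ∈ Ideal.span ((f '' (IsLocalRing.maximalIdeal A : Set A)) * (J : Set B)) →
      ∀ b : B, ∀ (h : ((b * z, (0 : C)) : B × C) ∈ BiAmalg f g J J'),
      (⟨(b * z, 0), h⟩ : BiAmalg f g J J') ∈
        Ideal.map (BiAmalg.incl f g J J') (IsLocalRing.maximalIdeal A) := by
    intro z hz
    induction hz using Submodule.span_induction with
    | mem z hz =>
      obtain ⟨u, ⟨a, ham, rfl⟩, y, hyJ, rfl⟩ := hz
      intro b h
      refine BiAmalg.mem_of_val_eq (x := (BiAmalg.incl f g J J') a *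
        ⟨(b * y, 0), BiAmalg.memL f g J J' (J.mul_mem_left b hyJ)⟩) ?_ ?_
      · show ((f a, g a) * (b * y, 0) : B × C) = (b * (f a * y), 0)
        simp only [Prod.mk_mul_mk, mul_zero, Prod.mk.injEq]
        exact ⟨by ring, trivial⟩
      · exact Ideal.mul_mem_right _ _ (Ideal.mem_map_of_mem _ ham)
    | zero =>
      intro b h
      exact BiAmalg.mem_of_val_eq (x := 0) (by simp <;> rfl) (Submodule.zero_mem _)
    | add z w hz hw pz pw =>
      intro b h
      have h1 : ((b * z, (0 : C)) : B × C) ∈ BiAmalg f g J J' := by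
        have := mul_add b z w
        exact BiAmalg.memL f g J J' (J.mul_mem_left b (Ideal.span_le.mpr (by
          rintro _ ⟨u, ⟨a, _, rfl⟩, y, hy, rfl⟩
          exact J.mul_mem_left _ hy) hz))
      have h2 : ((b * w, (0 : C)) : B × C) ∈ BiAmalg f g J J' := by
        exact BiAmalg.memL f g J J' (J.mul_mem_left b (Ideal.span_le.mpr (by
          rintro _ ⟨u, ⟨a, _, rfl⟩, y, hy, rfl⟩
          exact J.mul_mem_left _ hy) hw))
      refine BiAmalg.mem_of_val_eq
        (x := (⟨(b * z, 0), h1⟩ : BiAmalg f g J J') + ⟨(b * w, 0), h2⟩) ?_ ?_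
      · show ((b * z, (0:C)) + (b * w, 0) : B × C) = (b * (z + w), 0)
        simp [mul_add]
      · exact Submodule.add_mem _ (pz b h1) (pw b h2)
    | smul b' z hz pz =>
      intro b h
      have hval : b * b' * z = b * (b' • z) := by
        rw [smul_eq_mul]; ring
      have h' : ((b * b' * z, (0 : C)) : B × C) ∈ BiAmalg f g J J' := by
        rwa [hval]
      exact BiAmalg.mem_of_val_eq (x := ⟨(b * b' * z, 0), h'⟩)
        (by rw [Prod.mk.injEq]; exact ⟨hval, rfl⟩) (pz (b * b') h')
  intro h
  have h1 : ((1 * x, (0 : C)) : B × C) ∈ BiAmalg f g J J' := by rwa [one_mul]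
  exact BiAmalg.mem_of_val_eq (x := ⟨(1 * x, 0), h1⟩)
    (by rw [Prod.mk.injEq]; exact ⟨one_mul x, rfl⟩) (key x hx 1 h1)

open Pointwise in
lemma BiAmalg.right_mem_map [IsLocalRing A] (f : A →+* B) (g : A →+* C) (J : Ideal B)
    (J' : Ideal C) {x : C} (hx : x ∈ Ideal.map g (IsLocalRing.maximalIdeal A) * J') :
    ∀ (h : (((0 : B), x) : B × C) ∈ BiAmalg f g J J'),
      (⟨(0, x), h⟩ : BiAmalg f g J J') ∈
        Ideal.map (BiAmalg.incl f g J J') (IsLocalRing.maximalIdeal A) := by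
  have hspan : Ideal.map g (IsLocalRing.maximalIdeal A) * J'
      = Ideal.span ((g '' (IsLocalRing.maximalIdeal A : Set A)) * (J' : Set C)) := by
    have h1 : Ideal.map g (IsLocalRing.maximalIdeal A)
        = Ideal.span (g '' (IsLocalRing.maximalIdeal A : Set A)) := rfl
    rw [h1, ← Ideal.span_mul_span', Ideal.span_eq]
  rw [hspan] at hx
  have key : ∀ z, z ∈ Ideal.span ((g '' (IsLocalRing.maximalIdeal A : Set A)) * (J' : Set C)) →
      ∀ b : C, ∀ (h : (((0 : B), b * z) : B × C) ∈ BiAmalg f g J J'),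
      (⟨(0, b * z), h⟩ : BiAmalg f g J J') ∈
        Ideal.map (BiAmalg.incl f g J J') (IsLocalRing.maximalIdeal A) := by
    intro z hz
    induction hz using Submodule.span_induction with
    | mem z hz =>
      obtain ⟨u, ⟨a, ham, rfl⟩, y, hyJ, rfl⟩ := hz
      intro b h
      refine BiAmalg.mem_of_val_eq (x := (BiAmalg.incl f g J J') a *
        ⟨(0, b * y), BiAmalg.memR f g J J' (J'.mul_mem_left b hyJ)⟩) ?_ ?_
      · show ((f a, g a) * (0, b * y) : B × C) = (0, b * (g a * y))
        simp only [Prod.mk_mul_mk, mul_zero, Prod.mk.injEq]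
        exact ⟨trivial, by ring⟩
      · exact Ideal.mul_mem_right _ _ (Ideal.mem_map_of_mem _ ham)
    | zero =>
      intro b h
      exact BiAmalg.mem_of_val_eq (x := 0) (by simp <;> rfl) (Submodule.zero_mem _)
    | add z w hz hw pz pw =>
      intro b h
      have h1 : (((0 : B), b * z) : B × C) ∈ BiAmalg f g J J' := by
        exact BiAmalg.memR f g J J' (J'.mul_mem_left b (Ideal.span_le.mpr (by
          rintro _ ⟨u, ⟨a, _, rfl⟩, y, hy, rfl⟩
          exact J'.mul_mem_left _ hy) hz))
      have h2 : (((0 : B), b * w) : B × C) ∈ BiAmalg f g J J' := by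
        exact BiAmalg.memR f g J J' (J'.mul_mem_left b (Ideal.span_le.mpr (by
          rintro _ ⟨u, ⟨a, _, rfl⟩, y, hy, rfl⟩
          exact J'.mul_mem_left _ hy) hw))
      refine BiAmalg.mem_of_val_eq
        (x := (⟨(0, b * z), h1⟩ : BiAmalg f g J J') + ⟨(0, b * w), h2⟩) ?_ ?_
      · show (((0:B), b * z) + (0, b * w) : B × C) = (0, b * (z + w))
        simp [mul_add]
      · exact Submodule.add_mem _ (pz b h1) (pw b h2)
    | smul b' z hz pz =>
      intro b h
      have hval : b * b' * z = b * (b' • z) := by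
        rw [smul_eq_mul]; ring
      have h' : (((0 : B), b * b' * z) : B × C) ∈ BiAmalg f g J J' := by
        rwa [hval]
      exact BiAmalg.mem_of_val_eq (x := ⟨(0, b * b' * z), h'⟩)
        (by rw [Prod.mk.injEq]; exact ⟨rfl, hval⟩) (pz (b * b') h')
  intro h
  have h1 : (((0 : B), 1 * x) : B × C) ∈ BiAmalg f g J J' := by rwa [one_mul]
  exact BiAmalg.mem_of_val_eq (x := ⟨(0, 1 * x), h1⟩)
    (by rw [Prod.mk.injEq]; exact ⟨rfl, one_mul x⟩) (key x hx 1 h1)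

lemma BiAmalg.left_mem_radical [IsLocalRing A] (f : A →+* B) (g : A →+* C) (J : Ideal B)
    (J' : Ideal C) (hJ : J ≤ (⊥ : Ideal B).jacobson)
    (hfin : letI : Module A J := Module.compHom _ f; Module.Finite A J)
    {j : B} (hj : j ∈ J) :
    (⟨(j, 0), BiAmalg.memL f g J J' hj⟩ : BiAmalg f g J J') ∈
      (Ideal.map (BiAmalg.incl f g J J') (IsLocalRing.maximalIdeal A)).radical := by
  obtain ⟨n, hn, hmem⟩ := exists_pow_mem_mul f J hJ hfin hj
  refine Ideal.mem_radical_iff.mpr ⟨n, ?_⟩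
  have h0 : ((j ^ n, (0 : C)) : B × C) ∈ BiAmalg f g J J' :=
    BiAmalg.memL f g J J' (J.pow_mem_of_mem hj n hn)
  have h1 : (⟨(j, 0), BiAmalg.memL f g J J' hj⟩ : BiAmalg f g J J') ^ n
      = ⟨(j ^ n, 0), h0⟩ := by
    refine Subtype.ext ?_
    show ((j, (0 : C)) ^ n : B × C) = (j ^ n, 0)
    rw [Prod.pow_mk, zero_pow hn.ne']
  rw [h1]
  exact BiAmalg.left_mem_map f g J J' hmem h0

lemma BiAmalg.right_mem_radical [IsLocalRing A] (f : A →+* B) (g : A →+* C) (J : Ideal B)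
    (J' : Ideal C) (hJ' : J' ≤ (⊥ : Ideal C).jacobson)
    (hfin : letI : Module A J' := Module.compHom _ g; Module.Finite A J')
    {j : C} (hj : j ∈ J') :
    (⟨(0, j), BiAmalg.memR f g J J' hj⟩ : BiAmalg f g J J') ∈
      (Ideal.map (BiAmalg.incl f g J J') (IsLocalRing.maximalIdeal A)).radical := by
  obtain ⟨n, hn, hmem⟩ := exists_pow_mem_mul g J' hJ' hfin hj
  refine Ideal.mem_radical_iff.mpr ⟨n, ?_⟩
  have h0 : (((0 : B), j ^ n) : B × C) ∈ BiAmalg f g J J' :=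
    BiAmalg.memR f g J J' (J'.pow_mem_of_mem hj n hn)
  have h1 : (⟨(0, j), BiAmalg.memR f g J J' hj⟩ : BiAmalg f g J J') ^ n
      = ⟨(0, j ^ n), h0⟩ := by
    refine Subtype.ext ?_
    show (((0 : B), j) ^ n : B × C) = (0, j ^ n)
    rw [Prod.pow_mk, zero_pow hn.ne']
  rw [h1]
  exact BiAmalg.right_mem_map f g J J' hmem h0

lemma sub_pow_mem_ideal (J : Ideal B) (b j : B) (hj : j ∈ J) (n : ℕ) :
    (b + j) ^ n - b ^ n ∈ J := by
  have h1 : Ideal.Quotient.mk J ((b + j) ^ n) = Ideal.Quotient.mk J (b ^ n) := by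
    rw [map_pow, map_pow, map_add, Ideal.Quotient.eq_zero_iff_mem.mpr hj, add_zero]
  exact Ideal.Quotient.eq.mp h1

theorem biAmalg_maximalIdeal_eq_radical_of_finite (f : A →+* B) (g : A →+* C)
    (J : Ideal B) (J' : Ideal C) [IsLocalRing A]
    (hI : J.comap f = J'.comap g)
    (hJ : J ≤ (⊥ : Ideal B).jacobson) (hJ' : J' ≤ (⊥ : Ideal C).jacobson) :
    letI : Module A J := Module.compHom _ f
    letI : Module A J' := Module.compHom _ g
    Module.Finite A J → Module.Finite A J' →
    BiAmalg.idealOf f g J J' (maximalIdeal A) =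
      (Ideal.map (BiAmalg.incl f g J J') (maximalIdeal A)).radical := by
  intro hfJ hfJ'
  apply le_antisymm
  · -- idealOf m ≤ radical
    intro x hx
    obtain ⟨a, ha, j, hj, j', hj', hval⟩ := hx
    have hdec : x = BiAmalg.incl f g J J' a + ⟨(j, 0), BiAmalg.memL f g J J' hj⟩
        + ⟨(0, j'), BiAmalg.memR f g J J' hj'⟩ := by
      refine Subtype.ext ?_
      rw [hval]
      show ((f a + j, g a + j') : B × C) = ((f a, g a) + (j, 0) + (0, j') : B × C)
      simp
    rw [hdec]
    refine Submodule.add_mem _ (Submodule.add_mem _ ?_ ?_) ?_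
    · exact Ideal.le_radical (Ideal.mem_map_of_mem _ ha)
    · exact BiAmalg.left_mem_radical f g J J' hJ hfJ hj
    · exact BiAmalg.right_mem_radical f g J J' hJ' hfJ' hj'
  · -- radical ≤ idealOf m
    by_cases hsub : J.comap f ≤ maximalIdeal A
    · intro x hx
      obtain ⟨n, hn⟩ := Ideal.mem_radical_iff.mp hx
      have hmle : Ideal.map (BiAmalg.incl f g J J') (maximalIdeal A)
          ≤ BiAmalg.idealOf f g J J' (maximalIdeal A) := by
        rw [Ideal.map_le_iff_le_comap]
        intro a ha
        refine ⟨a, ha, 0, J.zero_mem, 0, J'.zero_mem, ?_⟩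
        show ((f a, g a) : B × C) = (f a + 0, g a + 0)
        simp
      obtain ⟨a, j, hj, j', hj', hxval⟩ := x.2
      obtain ⟨c, hc, l, hl, l', hl', hv⟩ := hmle hn
      have hxn : ((x : B × C)) ^ n = (f c + l, g c + l') := by
        rw [← hv]; rfl
      have h1 : (f a + j) ^ n = f c + l := by
        rw [hxval] at hxn
        rw [Prod.pow_mk] at hxn
        exact congrArg Prod.fst hxn
      have h2 : f (a ^ n - c) ∈ J := by
        have hd := sub_pow_mem_ideal J (f a) j hj n
        have he : f (a ^ n - c) = l - ((f a + j) ^ n - (f a) ^ n) := by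
          rw [map_sub, map_pow]
          linear_combination h1
        rw [he]
        exact J.sub_mem hl hd
      have h4 : a ^ n ∈ maximalIdeal A := by
        have h3 : a ^ n - c ∈ maximalIdeal A := hsub h2
        have := (maximalIdeal A).add_mem h3 hc
        simpa using this
      have h5 : a ∈ maximalIdeal A :=
        ((maximalIdeal.isMaximal A).isPrime.mem_of_pow_mem) n h4
      exact ⟨a, h5, j, hj, j', hj', hxval⟩
    · -- degenerate case: B and C are trivial
      rw [SetLike.not_le_iff_exists] at hsub
      obtain ⟨a, haJ, ham⟩ := hsub
      have haU : IsUnit a := not_not.mp ham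
      have hJtop : J = ⊤ := Ideal.eq_top_of_isUnit_mem J haJ (haU.map f)
      have hJ'top : J' = ⊤ := by
        have : a ∈ J'.comap g := by rw [← hI]; exact haJ
        exact Ideal.eq_top_of_isUnit_mem J' this (haU.map g)
      have hB : Subsingleton B := by
        have h1 : (1 : B) ∈ (⊥ : Ideal B).jacobson := hJ (by rw [hJtop]; trivial)
        have h2 := Ideal.mem_jacobson_bot.mp h1 (-1)
        simp only [one_mul, neg_add_cancel] at h2
        exact subsingleton_of_zero_eq_one (isUnit_zero_iff.mp h2)
      have hC : Subsingleton C := by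
        have h1 : (1 : C) ∈ (⊥ : Ideal C).jacobson := hJ' (by rw [hJ'top]; trivial)
        have h2 := Ideal.mem_jacobson_bot.mp h1 (-1)
        simp only [one_mul, neg_add_cancel] at h2
        exact subsingleton_of_zero_eq_one (isUnit_zero_iff.mp h2)
      intro x _
      refine ⟨0, Submodule.zero_mem _, 0, J.zero_mem, 0, J'.zero_mem, ?_⟩
      exact Subsingleton.elim _ _
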